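/- Let x ≥ 1 be an integer and let δ', δ'' be real numbers with 1 ≥ δ' ≥ δ'' > 0. Consider the speed vector consisting of x entries equal to 1 followed by the entries δ' and δ'' (so m = x + 2 speeds in nonincreasing order). Then the uniformity λ = max_{1 ≤ j ≤ m} (S_m − S_j)/δ_j equals max(x + δ' + δ'' − 1, δ''/δ'). -/

import Mathlib

/-- For x unit-speed processors plus two processors of speeds
1 ≥ δ' ≥ δ'' > 0, the uniformity equals max (x + δ' + δ'' - 1) (δ''/δ'). -/
theorem stmt_7 (x : ℕ) (hx : 1 ≤ x) (δ' δ'' : ℝ)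
    (h1 : δ' ≤ 1) (h2 : δ'' ≤ δ') (h3 : 0 < δ'')
    (speeds : ℕ → ℝ)
    (hspeeds : ∀ j, speeds j = if j ≤ x then 1 else if j = x + 1 then δ' else δ'')
    (S : ℕ → ℝ) (hS : ∀ y, S y = ∑ j ∈ Finset.Icc 1 y, speeds j)
    (lam : ℝ)
    (hlam : lam = (Finset.Icc 1 (x + 2)).sup'
      (Finset.nonempty_Icc.mpr (by omega))
      (fun j => (S (x + 2) - S j) / speeds j)) :
    lam = max ((x : ℝ) + δ' + δ'' - 1) (δ'' / δ') := by
  have hδ' : 0 < δ' := lt_of_lt_of_le h3 h2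
  have hSle : ∀ j, j ≤ x → S j = j := by
    intro j hj
    have : ∑ i ∈ Finset.Icc 1 j, speeds i = ∑ i ∈ Finset.Icc 1 j, (1:ℝ) := by
      refine Finset.sum_congr rfl (fun i hi => ?_)
      simp only [Finset.mem_Icc] at hi
      rw [hspeeds, if_pos (by omega)]
    rw [hS, this, Finset.sum_const, Nat.card_Icc]
    simp
  have hSx1 : S (x + 1) = x + δ' := by
    rw [hS, Finset.sum_Icc_succ_top (by omega)]
    have := hSle x le_rfl
    rw [hS] at this
    rw [this, hspeeds, if_neg (by omega), if_pos rfl]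
  have hSx2 : S (x + 2) = x + δ' + δ'' := by
    rw [hS, Finset.sum_Icc_succ_top (by omega)]
    rw [hS] at hSx1
    rw [show x + 1 + 1 = x + 2 from rfl] at *
    rw [hSx1, hspeeds, if_neg (by omega), if_neg (by omega)]
  have key : ∀ j, 1 ≤ j → j ≤ x → (S (x + 2) - S j) / speeds j = x + δ' + δ'' - j := by
    intro j h1j h2j
    rw [hSx2, hSle j h2j, hspeeds, if_pos h2j, div_one]
  have hpos : (0:ℝ) ≤ (x:ℝ) + δ' + δ'' - 1 := by
    have : (1:ℝ) ≤ (x:ℝ) := by exact_mod_cast hx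
    nlinarith
  rw [hlam]
  apply le_antisymm
  · apply Finset.sup'_le
    intro j hj
    simp only [Finset.mem_Icc] at hj
    rcases lt_or_ge x j with hxj | hxj
    · rcases Nat.lt_or_ge j (x + 2) with hj2 | hj2
      · have : j = x + 1 := by omega
        subst this
        rw [hSx2, hSx1, hspeeds, if_neg (by omega), if_pos rfl]
        have : (x:ℝ) + δ' + δ'' - ((x:ℝ) + δ') = δ'' := by ring
        rw [this]
        exact le_max_right _ _
      · have : j = x + 2 := by omega
        subst this
        rw [hSx2, hspeeds, if_neg (by omega), if_neg (by omega)]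
        have : ((x:ℝ) + δ' + δ'' - ((x:ℝ) + δ' + δ'')) / δ'' = 0 := by
          simp
        rw [this]
        exact le_trans hpos (le_max_left _ _)
    · rw [key j hj.1 hxj]
      refine le_trans ?_ (le_max_left _ _)
      have : (1:ℝ) ≤ (j:ℝ) := by exact_mod_cast hj.1
      linarith
  · apply max_le
    · refine le_trans (le_of_eq ?_) (Finset.le_sup' _ (Finset.mem_Icc.mpr ⟨le_rfl, by omega⟩ : 1 ∈ Finset.Icc 1 (x+2)))
      rw [key 1 le_rfl hx]
      norm_num
    · refine le_trans (le_of_eq ?_) (Finset.le_sup' _ (Finset.mem_Icc.mpr ⟨by omega, by omega⟩ : x + 1 ∈ Finset.Icc 1 (x+2)))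
      rw [hSx2, hSx1, hspeeds, if_neg (by omega), if_pos rfl]
      ring_nf
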